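/- Let p be a mixed strategy Nash equilibrium up to η (every action in the support of p_i is an η-best response against p_{-i}) of a γ-aggregative game. Then every action x_i in the support of p_i is an (η+γ)-aggregative best response to the expected aggregator S(p). -/
import Mathlib

/-- Let `p` be an η-approximate mixed Nash equilibrium of a γ-aggregative game,
in the sense that every action in the support of `p i` is an η-best response
against `p₋ᵢ`.  Then every action in the support of `p i` is an
(η+γ)-aggregative best response to the expected aggregator `S p`.  Here `S`
is the (expected) aggregator on mixed profiles, with bounded influence γ:
replacing any one player's mixed strategy (in particular by a pure action)
changes `S` by at most γ in ℓ∞; utilities are 1-Lipschitz in the aggregator. -/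
theorem mixed_support_aggregative_best_response
    {I A K : Type*} [DecidableEq I]
    (S : (I → PMF A) → K → ℝ) (u : I → A → (K → ℝ) → ℝ) (γ η : ℝ)
    (hinfl : ∀ (j : I) (q : PMF A) (y : I → PMF A) (k : K),
      |S (Function.update y j q) k - S y k| ≤ γ)
    (hlip : ∀ (j : I) (a : A) (s s' : K → ℝ) (c : ℝ),
      (∀ k, |s k - s' k| ≤ c) → |u j a s - u j a s'| ≤ c)
    (p : I → PMF A) (i : I)
    (hbr : ∀ x ∈ (p i).support, ∀ a : A,
      u i x (S p) ≥ u i a (S (Function.update p i (PMF.pure a))) - η) :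
    ∀ x ∈ (p i).support, ∀ a : A, u i x (S p) ≥ u i a (S p) - (η + γ) := by
  intro x hx a
  have h1 := hbr x hx a
  have h2 : |u i a (S (Function.update p i (PMF.pure a))) - u i a (S p)| ≤ γ :=
    hlip i a _ _ γ (fun k => hinfl i (PMF.pure a) p k)
  have := abs_le.mp h2
  linarith [this.1, this.2]
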